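/- In the same setting (C = S R_U D R_Vᵀ Tᵀ with D = diag(σ_1,…,σ_ρ,1,…,1), σ_j > 0, U_r and V_r invertible, ‖A‖=1), the smallest singular value of C does not exceed the smallest positive singular value of A: σ_n(C) ≤ σ_ρ(A). Equivalently, ‖C⁻¹‖ ≥ 1/σ_ρ(A). -/

import Mathlib

open Matrix
open scoped Matrix.Norms.L2Operator

/-- The `j`-th largest singular value (1-indexed) of a real matrix, characterized by
Eckart–Young: `σ_j(A) = inf { ‖A - B‖ : rank B < j }` (spectral norm). -/
noncomputable def singVal {m n : Type*} [Fintype m] [Fintype n] [DecidableEq n]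
    (A : Matrix m n ℝ) (j : ℕ) : ℝ :=
  sInf ((fun B : Matrix m n ℝ => ‖A - B‖) '' {B | B.rank < j})

namespace Stmt16Aux

variable {m n : Type*} [Fintype m] [Fintype n] [DecidableEq n]

/-- Euclidean norm of a plain vector. -/
noncomputable def enorm {n : Type*} [Fintype n] (x : n → ℝ) : ℝ :=
  ‖(WithLp.equiv 2 (n → ℝ)).symm x‖

lemma enorm_nonneg {n : Type*} [Fintype n] (x : n → ℝ) : 0 ≤ enorm x := norm_nonneg _

lemma enorm_eq_sqrt {n : Type*} [Fintype n] (x : n → ℝ) :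
    enorm x = Real.sqrt (x ⬝ᵥ x) := by
  rw [enorm, EuclideanSpace.norm_eq]
  congr 1
  simp [dotProduct, Real.norm_eq_abs, sq_abs, sq]

lemma enorm_sq {n : Type*} [Fintype n] (x : n → ℝ) : enorm x ^ 2 = x ⬝ᵥ x := by
  rw [enorm_eq_sqrt, Real.sq_sqrt]
  exact Finset.sum_nonneg fun i _ => mul_self_nonneg _

lemma dot_self_nonneg {n : Type*} [Fintype n] (x : n → ℝ) : 0 ≤ x ⬝ᵥ x :=
  Finset.sum_nonneg fun i _ => mul_self_nonneg _

lemma abs_dot_le {n : Type*} [Fintype n] (x y : n → ℝ) :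
    |x ⬝ᵥ y| ≤ enorm x * enorm y := by
  have := abs_real_inner_le_norm ((WithLp.equiv 2 (n → ℝ)).symm x)
    ((WithLp.equiv 2 (n → ℝ)).symm y)
  simpa [PiLp.inner_apply, dotProduct, RCLike.inner_apply, enorm, mul_comm] using this

lemma enorm_smul {n : Type*} [Fintype n] (a : ℝ) (x : n → ℝ) :
    enorm (a • x) = |a| * enorm x := by
  rw [enorm, enorm]
  rw [show (WithLp.equiv 2 (n → ℝ)).symm (a • x) = a • (WithLp.equiv 2 (n → ℝ)).symm x from rfl]
  simp [norm_smul]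

lemma enorm_mulVec_le (M : Matrix m n ℝ) (x : n → ℝ) :
    enorm (M *ᵥ x) ≤ ‖M‖ * enorm x := by
  have := M.l2_opNorm_mulVec ((WithLp.equiv 2 (n → ℝ)).symm x)
  simpa [enorm] using this

lemma opNorm_le_of_forall (M : Matrix m n ℝ) (c : ℝ) (hc : 0 ≤ c)
    (h : ∀ x : n → ℝ, enorm (M *ᵥ x) ≤ c * enorm x) : ‖M‖ ≤ c := by
  rw [Matrix.l2_opNorm_def]
  apply ContinuousLinearMap.opNorm_le_bound _ hc
  intro x
  simpa [enorm, Matrix.toEuclideanLin_apply] using h ((WithLp.equiv 2 (n → ℝ)) x)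

lemma enorm_mulVec_orth {n : Type*} [Fintype n] [DecidableEq n]
    {S : Matrix n n ℝ} (hS : Sᵀ * S = 1) (x : n → ℝ) :
    enorm (S *ᵥ x) = enorm x := by
  rw [enorm_eq_sqrt, enorm_eq_sqrt]
  congr 1
  calc (S *ᵥ x) ⬝ᵥ (S *ᵥ x) = (x ᵥ* Sᵀ) ⬝ᵥ (S *ᵥ x) := by rw [← Matrix.mulVec_transpose, Matrix.transpose_transpose]
    _ = x ⬝ᵥ (Sᵀ *ᵥ (S *ᵥ x)) := by rw [Matrix.dotProduct_mulVec x Sᵀ (S *ᵥ x)]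
    _ = x ⬝ᵥ x := by rw [Matrix.mulVec_mulVec, hS, Matrix.one_mulVec]

lemma vecMulVec_mulVec {n : Type*} [Fintype n] (w : m → ℝ) (v x : n → ℝ) :
    Matrix.vecMulVec w v *ᵥ x = (v ⬝ᵥ x) • w := by
  ext i
  simp [Matrix.vecMulVec, Matrix.mulVec, dotProduct, Finset.mul_sum, mul_assoc, mul_comm, mul_left_comm]

lemma rank_lt_of_mulVec_eq_zero {n : Type*} [Fintype n] [DecidableEq n]
    {B : Matrix n n ℝ} {y : n → ℝ} (hy : y ≠ 0) (h : B *ᵥ y = 0) :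
    B.rank < Fintype.card n := by
  have hker : 0 < Module.finrank ℝ (LinearMap.ker B.mulVecLin) := by
    rw [Module.finrank_pos_iff_exists_ne_zero]
    exact ⟨⟨y, by simpa [Matrix.mulVecLin_apply] using h⟩, by simpa using hy⟩
  have := LinearMap.finrank_range_add_finrank_ker B.mulVecLin
  rw [Module.finrank_pi] at this
  have : B.rank + Module.finrank ℝ (LinearMap.ker B.mulVecLin) = Fintype.card n := this
  omega

end Stmt16Aux


open Stmt16Aux in
theorem stmt16 {ρ r : ℕ} (hρ : 0 < ρ)
    (σ : Fin ρ → ℝ) (hσ : ∀ j, 0 < σ j)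
    (hmono : ∀ i j : Fin ρ, i ≤ j → σ j ≤ σ i)
    (S T : Matrix (Fin ρ ⊕ Fin r) (Fin ρ ⊕ Fin r) ℝ)
    (hS : Sᵀ * S = 1) (hS' : S * Sᵀ = 1) (hT : Tᵀ * T = 1) (hT' : T * Tᵀ = 1)
    (A Sig : Matrix (Fin ρ ⊕ Fin r) (Fin ρ ⊕ Fin r) ℝ)
    (hSig : Sig = Matrix.fromBlocks (Matrix.diagonal σ) 0 0 0)
    (hA : A = S * Sig * Tᵀ) (hA1 : ‖A‖ = 1)
    (U V : Matrix (Fin ρ ⊕ Fin r) (Fin r) ℝ)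
    (Ub : Matrix (Fin ρ) (Fin r) ℝ) (Ur : Matrix (Fin r) (Fin r) ℝ)
    (Vb : Matrix (Fin ρ) (Fin r) ℝ) (Vr : Matrix (Fin r) (Fin r) ℝ)
    (hU : Sᵀ * U = Matrix.fromRows Ub Ur) (hV : Tᵀ * V = Matrix.fromRows Vb Vr)
    (hUr : IsUnit Ur) (hVr : IsUnit Vr)
    (C : Matrix (Fin ρ ⊕ Fin r) (Fin ρ ⊕ Fin r) ℝ)
    (hC : C = A + U * Vᵀ) (hCu : IsUnit C) :
    singVal C (ρ + r) ≤ σ ⟨ρ - 1, by omega⟩ ∧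
    1 / σ ⟨ρ - 1, by omega⟩ ≤ ‖C⁻¹‖ := by
  classical
  set k : Fin ρ := ⟨ρ - 1, by omega⟩ with hk
  set e : Fin ρ → ℝ := Pi.single k 1 with he
  have hVrT : IsUnit (Vrᵀ).det := by
    rw [Matrix.det_transpose]; exact (Matrix.isUnit_iff_isUnit_det Vr).mp hVr
  set w : Fin r → ℝ := -((Vrᵀ)⁻¹ *ᵥ (Vbᵀ *ᵥ e)) with hw
  set z : (Fin ρ ⊕ Fin r) → ℝ := Sum.elim e w with hz
  set y : (Fin ρ ⊕ Fin r) → ℝ := T *ᵥ z with hy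
  set u : (Fin ρ ⊕ Fin r) → ℝ := Sum.elim (Pi.single k (σ k)) 0 with hu
  -- V^T y = 0
  have hVy : Vᵀ *ᵥ y = 0 := by
    have hVT : Vᵀ * T = Matrix.fromCols Vbᵀ Vrᵀ := by
      have h1 : (Tᵀ * V)ᵀ = Vᵀ * T := by
        rw [Matrix.transpose_mul, Matrix.transpose_transpose]
      rw [← h1, hV, Matrix.transpose_fromRows]
    rw [hy, Matrix.mulVec_mulVec, hVT, hz, Matrix.fromCols_mulVec_sumElim, hw]
    simp only [Matrix.mulVec_neg, Matrix.mulVec_mulVec, ← Matrix.mul_assoc,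
      Matrix.mul_nonsing_inv _ hVrT, Matrix.one_mul, add_neg_cancel]
  -- C y = S u
  have hSigz : Sig *ᵥ z = u := by
    have hd : Matrix.diagonal σ *ᵥ e = Pi.single k (σ k) := by
      rw [he, Matrix.diagonal_mulVec_single, mul_one]
    rw [hSig, hz, Matrix.fromBlocks_mulVec, hu]
    simp only [Sum.elim_comp_inl, Sum.elim_comp_inr, Matrix.zero_mulVec, add_zero, hd]
  have hCy : C *ᵥ y = S *ᵥ u := by
    have h3 : ∀ v : (Fin ρ ⊕ Fin r) → ℝ, (U * Vᵀ) *ᵥ v = U *ᵥ (Vᵀ *ᵥ v) := fun v => by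
      rw [Matrix.mulVec_mulVec]
    rw [hC, Matrix.add_mulVec, h3 y, hVy, Matrix.mulVec_zero, add_zero]
    have hAT : A * T = S * Sig := by
      rw [hA, Matrix.mul_assoc (S * Sig), hT, Matrix.mul_one]
    rw [hA] at hAT ⊢
    rw [hy, Matrix.mulVec_mulVec, hAT, ← Matrix.mulVec_mulVec, hSigz]
  -- norms
  have hnCy : Stmt16Aux.enorm (C *ᵥ y) = σ k := by
    rw [hCy, enorm_mulVec_orth hS, enorm_eq_sqrt]
    have huu : u ⬝ᵥ u = σ k * σ k := by
      rw [hu, sumElim_dotProduct_sumElim]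
      simp [single_dotProduct]
    rw [huu, Real.sqrt_mul_self (le_of_lt (hσ k))]
  have hy1 : 1 ≤ Stmt16Aux.enorm y := by
    rw [hy, enorm_mulVec_orth hT]
    have h1 : (1:ℝ) ≤ z ⬝ᵥ z := by
      rw [hz, sumElim_dotProduct_sumElim]
      have he1 : e ⬝ᵥ e = 1 := by simp [he, single_dotProduct]
      nlinarith [dot_self_nonneg w]
    calc (1:ℝ) = Real.sqrt 1 := by simp
      _ ≤ Real.sqrt (z ⬝ᵥ z) := Real.sqrt_le_sqrt h1
      _ = Stmt16Aux.enorm z := (enorm_eq_sqrt z).symm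
  have hyne : y ≠ 0 := by
    intro h
    rw [h] at hy1
    simp only [Stmt16Aux.enorm] at hy1
    norm_num at hy1
  -- part 2
  have hCdet : IsUnit C.det := (Matrix.isUnit_iff_isUnit_det C).mp hCu
  have hpart2 : 1 / σ k ≤ ‖C⁻¹‖ := by
    have h2 := enorm_mulVec_le C⁻¹ (C *ᵥ y)
    rw [Matrix.mulVec_mulVec, Matrix.nonsing_inv_mul C hCdet, Matrix.one_mulVec, hnCy] at h2
    rw [div_le_iff₀ (hσ k)]
    linarith
  -- part 1
  have ha : 0 < Stmt16Aux.enorm y := lt_of_lt_of_le one_pos hy1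
  have ha2 : Stmt16Aux.enorm y ^ 2 = y ⬝ᵥ y := enorm_sq y
  set M : Matrix (Fin ρ ⊕ Fin r) (Fin ρ ⊕ Fin r) ℝ := Matrix.vecMulVec (C *ᵥ y) y with hM
  set B : Matrix (Fin ρ ⊕ Fin r) (Fin ρ ⊕ Fin r) ℝ := C - (Stmt16Aux.enorm y ^ 2)⁻¹ • M with hB
  have hBy : B *ᵥ y = 0 := by
    rw [hB, Matrix.sub_mulVec, Matrix.smul_mulVec, hM, Stmt16Aux.vecMulVec_mulVec, ← ha2,
      smul_smul, inv_mul_cancel₀ (by positivity), one_smul, sub_self]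
  have hrank : B.rank < ρ + r := by
    have h := rank_lt_of_mulVec_eq_zero hyne hBy
    simpa [Fintype.card_sum] using h
  have hCB : C - B = (Stmt16Aux.enorm y ^ 2)⁻¹ • M := by
    rw [hB, sub_sub_cancel]
  have hnormCB : ‖C - B‖ ≤ σ k := by
    rw [hCB]
    apply opNorm_le_of_forall _ _ (le_of_lt (hσ k))
    intro x
    rw [Matrix.smul_mulVec, hM, Stmt16Aux.vecMulVec_mulVec, smul_smul, Stmt16Aux.enorm_smul, hnCy]
    have hcs := abs_dot_le y x
    have hkey : |(Stmt16Aux.enorm y ^ 2)⁻¹ * (y ⬝ᵥ x)| ≤ Stmt16Aux.enorm x := by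
      rw [abs_mul, abs_of_nonneg (by positivity : (0:ℝ) ≤ (Stmt16Aux.enorm y ^ 2)⁻¹)]
      have step : (Stmt16Aux.enorm y ^ 2)⁻¹ * |y ⬝ᵥ x| ≤ (Stmt16Aux.enorm y ^ 2)⁻¹ * (Stmt16Aux.enorm y * Stmt16Aux.enorm x) := by
        gcongr
      have step2 : (Stmt16Aux.enorm y ^ 2)⁻¹ * (Stmt16Aux.enorm y * Stmt16Aux.enorm x) = Stmt16Aux.enorm x / Stmt16Aux.enorm y := by
        field_simp
      rw [step2] at step
      exact le_trans step (div_le_self (Stmt16Aux.enorm_nonneg x) hy1)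
    nlinarith [hσ k, abs_nonneg ((Stmt16Aux.enorm y ^ 2)⁻¹ * (y ⬝ᵥ x))]
  have hmem : ‖C - B‖ ∈ (fun B : Matrix (Fin ρ ⊕ Fin r) (Fin ρ ⊕ Fin r) ℝ => ‖C - B‖) ''
      {B | B.rank < ρ + r} := ⟨B, hrank, rfl⟩
  have hbdd : BddBelow ((fun B : Matrix (Fin ρ ⊕ Fin r) (Fin ρ ⊕ Fin r) ℝ => ‖C - B‖) ''
      {B | B.rank < ρ + r}) := by
    refine ⟨0, fun t ht => ?_⟩
    obtain ⟨B', -, rfl⟩ := ht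
    exact norm_nonneg _
  exact ⟨le_trans (csInf_le hbdd hmem) hnormCB, hpart2⟩
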